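/- Let n ≥ 4 and let σ be a permutation of Fin n. Then every cycle of the permutation σ × σ of Fin n × Fin n (acting componentwise) has length at most ⌊n²/4⌋. -/

import Mathlib

open Function

private lemma perm_mem_periodicPts {m : ℕ} (σ : Equiv.Perm (Fin m)) (a : Fin m)
    (hm : 0 < m) : a ∈ periodicPts ⇑σ := by
  refine mk_mem_periodicPts (orderOf_pos σ) ?_
  have : Fact (0 < m) := ⟨hm⟩
  show (⇑σ)^[orderOf σ] a = a
  rw [Equiv.Perm.iterate_eq_pow, pow_orderOf_eq_one]
  rfl

private lemma perm_period_card_le {m : ℕ} (σ : Equiv.Perm (Fin m)) (a : Fin m) :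
    ∃ s : Finset (Fin m), s.card = minimalPeriod ⇑σ a ∧
      ∀ y ∈ s, ∃ i, (⇑σ)^[i] a = y := by
  refine ⟨(Finset.range (minimalPeriod ⇑σ a)).image (fun i => (⇑σ)^[i] a), ?_, ?_⟩
  · rw [Finset.card_image_of_injOn, Finset.card_range]
    intro i hi j hj hij
    exact iterate_injOn_Iio_minimalPeriod (Finset.mem_range.mp hi) (Finset.mem_range.mp hj) hij
  · intro y hy
    obtain ⟨i, _, hi⟩ := Finset.mem_image.mp hy
    exact ⟨i, hi⟩

private lemma perm_period_eq_of_iterate_eq {m : ℕ} (hm : 0 < m) (σ : Equiv.Perm (Fin m))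
    (a b : Fin m) {i j : ℕ} (h : (⇑σ)^[i] a = (⇑σ)^[j] b) :
    minimalPeriod ⇑σ a = minimalPeriod ⇑σ b := by
  have ha := minimalPeriod_apply_iterate (perm_mem_periodicPts σ a hm) i
  have hb := minimalPeriod_apply_iterate (perm_mem_periodicPts σ b hm) j
  rw [← ha, ← hb, h]

/-- For `n ≥ 4`, every cycle of the permutation `σ × σ` of `Fin n × Fin n` has length at
most `⌊n²/4⌋` (the cycle length of a point is its minimal period). -/
theorem cycle_length_prodCongr_le (n : ℕ) (hn : 4 ≤ n) (σ : Equiv.Perm (Fin n))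
    (x : Fin n × Fin n) :
    Function.minimalPeriod (⇑(Equiv.prodCongr σ σ)) x ≤ n ^ 2 / 4 := by
  have hn0 : 0 < n := by omega
  have hcoe : ⇑(Equiv.prodCongr σ σ) = Prod.map ⇑σ ⇑σ := by
    ext y <;> rfl
  rw [hcoe, minimalPeriod_prodMap]
  set p := minimalPeriod ⇑σ x.1 with hp
  set q := minimalPeriod ⇑σ x.2 with hq
  obtain ⟨sa, hsa, hsa'⟩ := perm_period_card_le σ x.1
  obtain ⟨sb, hsb, hsb'⟩ := perm_period_card_le σ x.2
  have hpn : p ≤ n := by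
    calc p = sa.card := hsa.symm
    _ ≤ Fintype.card (Fin n) := Finset.card_le_card (Finset.subset_univ _)
    _ = n := Fintype.card_fin n
  have hppos : 0 < p := minimalPeriod_pos_of_mem_periodicPts (perm_mem_periodicPts σ x.1 hn0)
  have hqpos : 0 < q := minimalPeriod_pos_of_mem_periodicPts (perm_mem_periodicPts σ x.2 hn0)
  by_cases hpq : p = q
  · rw [hpq, Nat.lcm_self]
    rw [Nat.le_div_iff_mul_le (by norm_num)]
    calc q * 4 ≤ n * n := Nat.mul_le_mul (hpq ▸ hpn) hn
    _ = n ^ 2 := (sq n).symm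
  · -- orbits are disjoint
    have hdisj : Disjoint sa sb := by
      rw [Finset.disjoint_left]
      intro y hya hyb
      obtain ⟨i, hi⟩ := hsa' y hya
      obtain ⟨j, hj⟩ := hsb' y hyb
      exact hpq (perm_period_eq_of_iterate_eq hn0 σ x.1 x.2 (hi.trans hj.symm))
    have hsum : p + q ≤ n := by
      calc p + q = sa.card + sb.card := by rw [hsa, hsb]
      _ = (sa ∪ sb).card := (Finset.card_union_of_disjoint hdisj).symm
      _ ≤ Fintype.card (Fin n) := Finset.card_le_card (Finset.subset_univ _)
      _ = n := Fintype.card_fin n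
    have hlcm : Nat.lcm p q ≤ p * q := Nat.le_of_dvd (Nat.mul_pos hppos hqpos)
      (Nat.lcm_dvd (dvd_mul_right p q) (dvd_mul_left q p))
    have h4pq : 4 * (p * q) ≤ n ^ 2 := by
      nlinarith [sq_nonneg (p - q : ℤ)]
    calc Nat.lcm p q ≤ p * q := hlcm
    _ = 4 * (p * q) / 4 := by omega
    _ ≤ n ^ 2 / 4 := Nat.div_le_div_right h4pq
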